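/- For every n ≥ 1, the matrix Ê_n of the quadratic form given by the combinatorial hyperdeterminant of a 2n-qubit hypermatrix — i.e. the symmetric matrix Ê_n ∈ ℂ^{4^n × 4^n} satisfying |ψ⟩^T Ê_n |ψ⟩ = hdet(ψ̂) for every ψ : {0,1}^{2n} → ℂ — is a symmetric anti-diagonal matrix: using 0-based indices, (Ê_n)_{j,k} = 0 unless j + k = 4^n − 1, and (Ê_n)_{j, 4^n−1−j} = (1/2)(−1)^{w(j)}, where w(j) is the binary weight of j. In particular, all of its nonzero entries are ±1/2. -/

import Mathlib

/-- The `k`-th bit (big-endian, `0`-based) of an index `j`, so that for `j < 2^n`,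
`j = Σ_k (bit j k) · 2^{n-1-k}` (lexicographic order of bit strings). -/
def qbit (n : ℕ) (j : ℕ) (k : Fin n) : Fin 2 :=
  ⟨j / 2 ^ (n - 1 - (k : ℕ)) % 2, by omega⟩

/-- The vectorization `|ψ⟩ ∈ ℂ^{4^n}` of a `2n`-qubit hypermatrix, listing the entries in
lexicographic order of the binary index `j = Σ_k i_k 2^{2n−k}`. -/
noncomputable def vecQ (n : ℕ) (ψ : (Fin (2 * n) → Fin 2) → ℂ) : Fin (4 ^ n) → ℂ :=
  fun j => ψ (qbit (2 * n) (j : ℕ))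

/-- The combinatorial hyperdeterminant of an order-`N` side-2 hypermatrix:
`hdet H = Σ_{σ_2,...,σ_N ∈ S_2} (−1)^m H_{0σ_2(0)...σ_N(0)} H_{1σ_2(1)...σ_N(1)}`,
where `m` is the number of the permutations `σ_2,...,σ_N` that are transpositions. -/
noncomputable def hdetQ (N : ℕ) (hN : 0 < N) (H : (Fin N → Fin 2) → ℂ) : ℂ :=
  ∑ σ : Fin N → Equiv.Perm (Fin 2),
    if σ ⟨0, hN⟩ = 1 then
      (∏ k, ((Equiv.Perm.sign (σ k) : ℤ) : ℂ)) *
        (H (fun k => σ k 0) * H (fun k => σ k 1))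
    else 0

/-- The binary weight `w(j)`: the number of 1's in the binary expansion of `j`. -/
def binWeight (j : ℕ) : ℕ := (Nat.digits 2 j).count 1

namespace EntAux

def enc (N : ℕ) (i : Fin N → Fin 2) : ℕ := ∑ k : Fin N, (i k : ℕ) * 2 ^ (N - 1 - (k : ℕ))

lemma sum_two_pow (N : ℕ) : ∑ m ∈ Finset.range N, 2 ^ m = 2 ^ N - 1 := by
  induction N with
  | zero => simp
  | succ n ih =>
    rw [Finset.sum_range_succ, ih]
    have h1 : 1 ≤ 2 ^ n := Nat.one_le_two_pow
    have h2 : (2:ℕ) ^ (n+1) = 2 ^ n + 2 ^ n := by ring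
    omega

lemma enc_lt (N : ℕ) (i : Fin N → Fin 2) : enc N i < 2 ^ N := by
  have h1 : enc N i ≤ ∑ k : Fin N, 1 * 2 ^ (N - 1 - (k:ℕ)) :=
    Finset.sum_le_sum fun k _ => Nat.mul_le_mul_right _ (by have := (i k).isLt; omega)
  have h2 : ∑ k : Fin N, 1 * 2 ^ (N - 1 - (k:ℕ)) = 2 ^ N - 1 := by
    rw [Fin.sum_univ_eq_sum_range (fun m => 1 * 2 ^ (N - 1 - m)) N,
      Finset.sum_range_reflect (fun m => 1 * 2 ^ m) N]
    simp [sum_two_pow]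
  have h3 : 1 ≤ 2 ^ N := Nat.one_le_two_pow
  omega

lemma bits_mul_sum (N : ℕ) : ∀ j, j < 2 ^ N → ∑ m ∈ Finset.range N, (j / 2 ^ m % 2) * 2 ^ m = j := by
  induction N with
  | zero => intro j hj; interval_cases j; simp
  | succ n ih =>
    intro j hj
    rw [Finset.sum_range_succ']
    have h2 : ∀ i, j / 2 ^ (i+1) % 2 * 2 ^ (i+1) = (j / 2 / 2 ^ i % 2 * 2 ^ i) * 2 := by
      intro i
      rw [Nat.div_div_eq_div_mul, pow_succ']
      ring_nf
    rw [Finset.sum_congr rfl (fun i _ => h2 i), ← Finset.sum_mul]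
    have hlt : j / 2 < 2 ^ n := by
      have : (2:ℕ) ^ (n+1) = 2 ^ n * 2 := by ring
      omega
    rw [ih (j / 2) hlt]
    simp only [pow_zero, Nat.div_one]
    omega

lemma binWeight_sum (N : ℕ) : ∀ j, j < 2 ^ N → binWeight j = ∑ m ∈ Finset.range N, j / 2 ^ m % 2 := by
  induction N with
  | zero => intro j hj; interval_cases j; simp [binWeight]
  | succ n ih =>
    intro j hj
    rcases Nat.eq_zero_or_pos j with rfl | hj0
    · simp [binWeight]
    · rw [Finset.sum_range_succ']
      have hrec : binWeight j = binWeight (j / 2) + j % 2 := by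
        unfold binWeight
        rw [Nat.digits_def' (by norm_num) hj0, List.count_cons]
        have := Nat.mod_two_eq_zero_or_one j
        rcases this with h | h <;> simp [h]
      have h2 : ∀ i, j / 2 ^ (i+1) % 2 = (j / 2) / 2 ^ i % 2 := by
        intro i
        rw [Nat.div_div_eq_div_mul, pow_succ']
      rw [Finset.sum_congr rfl (fun i _ => h2 i)]
      have hlt : j / 2 < 2 ^ n := by
        have : (2:ℕ) ^ (n+1) = 2 ^ n * 2 := by ring
        omega
      rw [← ih (j / 2) hlt, hrec]
      norm_num

lemma enc_qbit (N : ℕ) (j : ℕ) (hj : j < 2 ^ N) : enc N (qbit N j) = j := by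
  unfold enc qbit
  rw [Fin.sum_univ_eq_sum_range (fun m => j / 2 ^ (N - 1 - m) % 2 * 2 ^ (N - 1 - m)) N,
    Finset.sum_range_reflect (fun m => j / 2 ^ m % 2 * 2 ^ m) N]
  exact bits_mul_sum N j hj

lemma binWeight_qbit (N j : ℕ) (hj : j < 2 ^ N) : (∑ k : Fin N, ((qbit N j k : ℕ))) = binWeight j := by
  unfold qbit
  rw [Fin.sum_univ_eq_sum_range (fun m => j / 2 ^ (N - 1 - m) % 2) N,
    Finset.sum_range_reflect (fun m => j / 2 ^ m % 2) N]
  exact (binWeight_sum N j hj).symm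

lemma enc_cpl (N : ℕ) (i : Fin N → Fin 2) :
    enc N (fun k => i k + 1) + enc N i = 2 ^ N - 1 := by
  unfold enc
  rw [← Finset.sum_add_distrib]
  have h : ∀ k : Fin N,
      ((i k + 1 : Fin 2) : ℕ) * 2 ^ (N-1-(k:ℕ)) + (i k : ℕ) * 2 ^ (N-1-(k:ℕ)) = 2 ^ (N-1-(k:ℕ)) := by
    intro k
    have h1 : ((i k + 1 : Fin 2) : ℕ) = ((i k : ℕ) + 1) % 2 := by
      simp [Fin.val_add]
    have h2 : (i k : ℕ) < 2 := (i k).isLt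
    have h3 : ((i k : ℕ) + 1) % 2 + (i k : ℕ) = 1 := by omega
    rw [h1, ← add_mul, h3, one_mul]
  rw [Finset.sum_congr rfl (fun k _ => h k),
    Fin.sum_univ_eq_sum_range (fun m => 2 ^ (N - 1 - m)) N,
    Finset.sum_range_reflect (fun m => 2 ^ m) N, sum_two_pow]

lemma enc_inj (N : ℕ) {a b : Fin N → Fin 2} (h : enc N a = enc N b) : a = b := by
  have hs : Function.Surjective (fun i : Fin N → Fin 2 => (⟨enc N i, enc_lt N i⟩ : Fin (2 ^ N))) := by
    intro j
    exact ⟨qbit N j, by simp [Fin.ext_iff, enc_qbit N j j.isLt]⟩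
  have hb := (Fintype.bijective_iff_surjective_and_card
    (fun i : Fin N → Fin 2 => (⟨enc N i, enc_lt N i⟩ : Fin (2 ^ N)))).mpr ⟨hs, by simp⟩
  exact hb.1 (by simp [Fin.ext_iff, h])

def permEquiv : Equiv.Perm (Fin 2) ≃ Fin 2 where
  toFun σ := σ 0
  invFun x := if x = 0 then 1 else Equiv.swap 0 1
  left_inv := by decide
  right_inv := by decide

lemma hdet_eq (N : ℕ) (hN : 0 < N) (H : (Fin N → Fin 2) → ℂ) :
    hdetQ N hN H = ∑ i : Fin N → Fin 2,
      if i ⟨0, hN⟩ = 0 then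
        (∏ k, ((-1 : ℂ) ^ ((i k : ℕ)))) * (H i * H (fun k => i k + 1))
      else 0 := by
  unfold hdetQ
  apply Fintype.sum_equiv (Equiv.arrowCongr (Equiv.refl (Fin N)) permEquiv)
  intro σ
  have h0 : ∀ τ : Equiv.Perm (Fin 2), (τ = 1) ↔ (τ 0 = 0) := by decide
  have h2 : ∀ τ : Equiv.Perm (Fin 2), τ 1 = τ 0 + 1 := by decide
  have h3 : ∀ τ : Equiv.Perm (Fin 2), ((Equiv.Perm.sign τ : ℤ)) = (-1)^((τ 0 : ℕ)) := by decide
  have hc : ((Equiv.arrowCongr (Equiv.refl (Fin N)) permEquiv) σ) = fun k => σ k 0 := rfl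
  rw [hc]
  by_cases h : σ ⟨0, hN⟩ = 1
  · rw [if_pos h, if_pos ((h0 _).mp h)]
    have hy : (fun k => σ k 1) = fun k => σ k 0 + 1 := funext fun k => h2 (σ k)
    rw [hy]
    congr 1
    apply Finset.prod_congr rfl
    intro k _
    rw [h3 (σ k)]
    push_cast
    ring
  · rw [if_neg h, if_neg (fun hh => h ((h0 _).mpr hh))]

lemma hdet_ind_zero (N : ℕ) (hN : 0 < N) (A B : Fin N → Fin 2)
    (hAB : (fun k => A k + 1) ≠ B) :
    hdetQ N hN (fun i => (if i = A then (1:ℂ) else 0) + (if i = B then 1 else 0)) = 0 := by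
  have hx : ∀ x : Fin 2, x + 1 ≠ x := by decide
  have hself : ∀ i : Fin N → Fin 2, (fun k => i k + 1) ≠ i := by
    intro i h
    exact hx (i ⟨0, hN⟩) (congrFun h ⟨0, hN⟩)
  have hBA : (fun k => B k + 1) ≠ A := by
    intro h
    apply hAB
    funext k
    have := congrFun h k
    fin_omega
  rw [hdet_eq]
  apply Finset.sum_eq_zero
  intro i _
  rcases eq_or_ne i A with rfl | hiA
  · have h1 : (fun k => i k + 1) ≠ i := hself i
    have h2 : (fun k : Fin N => i k + 1) ≠ B := hAB
    simp [if_neg h1, if_neg h2]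
  · rcases eq_or_ne i B with rfl | hiB
    · have h1 : (fun k => i k + 1) ≠ i := hself i
      have h2 : (fun k : Fin N => i k + 1) ≠ A := hBA
      simp [if_neg h1, if_neg h2, if_neg hiA]
    · simp [if_neg hiA, if_neg hiB]

lemma hdet_ind_anti (N : ℕ) (hN : 0 < N) (hEven : Even N) (A : Fin N → Fin 2) :
    hdetQ N hN (fun i => (if i = A then (1:ℂ) else 0) +
      (if i = (fun k => A k + 1) then 1 else 0)) = (-1 : ℂ) ^ (∑ k, (A k : ℕ)) := by
  have hx : ∀ x : Fin 2, x + 1 ≠ x := by decide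
  have hselfA : (fun k => A k + 1) ≠ A := by
    intro h; exact hx (A ⟨0, hN⟩) (congrFun h ⟨0, hN⟩)
  have hselfA' : A ≠ (fun k => A k + 1) := Ne.symm hselfA
  have hcpl : (fun k : Fin N => (A k + 1) + 1) = A := by
    funext k; fin_omega
  have hprodB : (∏ k, ((-1 : ℂ) ^ (((A k + 1 : Fin 2)) : ℕ))) = ∏ k, ((-1 : ℂ) ^ ((A k : ℕ))) := by
    have h1 : ∀ x : Fin 2, ((-1:ℂ)) ^ (((x + 1 : Fin 2)) : ℕ) = (-1) * ((-1) ^ (x : ℕ)) := by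
      intro x
      have hv : ((x + 1 : Fin 2) : ℕ) = 1 - (x : ℕ) := by fin_omega
      have hlt := x.isLt
      rcases (by omega : (x:ℕ) = 0 ∨ (x:ℕ) = 1) with h|h <;> rw [hv, h] <;> norm_num
    calc (∏ k, ((-1 : ℂ) ^ (((A k + 1 : Fin 2)) : ℕ)))
        = ∏ k, ((-1:ℂ) * ((-1) ^ ((A k : ℕ)))) := Finset.prod_congr rfl fun k _ => h1 (A k)
      _ = (∏ _k : Fin N, (-1:ℂ)) * ∏ k, ((-1:ℂ) ^ ((A k : ℕ))) := Finset.prod_mul_distrib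
      _ = ∏ k, ((-1:ℂ) ^ ((A k : ℕ))) := by
          rw [Finset.prod_const, Finset.card_univ, Fintype.card_fin, hEven.neg_one_pow, one_mul]
  rw [hdet_eq, Fintype.sum_eq_add A (fun k => A k + 1) hselfA'
    (by
      intro x ⟨hxA, hxB⟩
      simp [if_neg hxA, if_neg hxB])]
  by_cases hz : A ⟨0, hN⟩ = 0
  · have hz' : ¬ ((fun k : Fin N => A k + 1) ⟨0, hN⟩ = 0) := by
      show ¬ (A ⟨0, hN⟩ + 1 = 0)
      fin_omega
    rw [if_pos hz, if_neg hz', if_pos rfl, if_neg hselfA', if_neg hselfA, if_pos rfl,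
      Finset.prod_pow_eq_pow_sum]
    ring
  · have hz' : ((fun k : Fin N => A k + 1) ⟨0, hN⟩ = 0) := by
      show A ⟨0, hN⟩ + 1 = 0
      fin_omega
    rw [if_neg hz, if_pos hz', if_neg hselfA, if_pos rfl, hcpl, if_pos rfl, if_neg hselfA',
      hprodB, Finset.prod_pow_eq_pow_sum]
    ring

end EntAux

theorem ent_matrix_antidiag (n : ℕ) (hn : 1 ≤ n)
    (E : Matrix (Fin (4 ^ n)) (Fin (4 ^ n)) ℂ) (hsymm : E.IsSymm)
    (hquad : ∀ ψ : (Fin (2 * n) → Fin 2) → ℂ,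
      dotProduct (vecQ n ψ) (E.mulVec (vecQ n ψ)) = hdetQ (2 * n) (by omega) ψ) :
    (∀ j k : Fin (4 ^ n), (j : ℕ) + (k : ℕ) ≠ 4 ^ n - 1 → E j k = 0) ∧
      ∀ j : Fin (4 ^ n),
        E j ⟨4 ^ n - 1 - (j : ℕ), by have := j.isLt; omega⟩ =
          (1 / 2 : ℂ) * (-1) ^ binWeight (j : ℕ) := by
  have hM : 4 ^ n = 2 ^ (2 * n) := by
    rw [pow_mul]; norm_num
  have hNpos : 0 < 2 * n := by omega
  have hx : ∀ x : Fin 2, x + 1 ≠ x := by decide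
  -- key computation
  have key : ∀ j k : Fin (4 ^ n),
      E j j + E j k + E k j + E k k =
        hdetQ (2 * n) hNpos
          (fun i => (if i = qbit (2*n) (j:ℕ) then (1:ℂ) else 0) +
            (if i = qbit (2*n) (k:ℕ) then 1 else 0)) := by
    intro j k
    set ψ : (Fin (2 * n) → Fin 2) → ℂ := fun i =>
      (if i = qbit (2*n) (j:ℕ) then (1:ℂ) else 0) + (if i = qbit (2*n) (k:ℕ) then 1 else 0)
      with hψdef
    have hψ : vecQ n ψ = fun m => (if m = j then (1:ℂ) else 0) + (if m = k then 1 else 0) := by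
      funext m
      have hq : ∀ a : Fin (4 ^ n), (qbit (2*n) (m:ℕ) = qbit (2*n) (a:ℕ)) ↔ m = a := by
        intro a
        constructor
        · intro h
          have h1 := EntAux.enc_qbit (2*n) (m:ℕ) (hM ▸ m.isLt)
          have h2 := EntAux.enc_qbit (2*n) (a:ℕ) (hM ▸ a.isLt)
          apply Fin.ext
          rw [← h1, ← h2, h]
        · intro h; rw [h]
      show ψ (qbit (2*n) (m:ℕ)) = _
      rw [hψdef]
      simp only [hq]
    have h := hquad ψ
    rw [hψ] at h
    have hdot : dotProduct
        (fun m => (if m = j then (1:ℂ) else 0) + (if m = k then 1 else 0))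
        (E.mulVec (fun m => (if m = j then (1:ℂ) else 0) + (if m = k then 1 else 0))) =
        E j j + E j k + E k j + E k k := by
      simp only [dotProduct, Matrix.mulVec, mul_add, add_mul, Finset.sum_add_distrib,
        mul_ite, ite_mul, mul_one, mul_zero, one_mul, zero_mul, Finset.sum_ite_eq,
        Finset.sum_ite_eq', Finset.mem_univ, if_true]
      ring
    rw [hdot] at h
    exact h
  have diag : ∀ j : Fin (4 ^ n), E j j = 0 := by
    intro j
    have h := key j j
    rw [EntAux.hdet_ind_zero (2*n) hNpos (qbit (2*n) (j:ℕ)) (qbit (2*n) (j:ℕ))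
      (fun hc => hx _ (congrFun hc ⟨0, hNpos⟩))] at h
    linear_combination h / 4
  have hsymmE : ∀ j k : Fin (4 ^ n), E k j = E j k := fun j k => congrFun (congrFun hsymm j) k
  constructor
  · intro j k hjk
    have hAB : (fun t => qbit (2*n) (j:ℕ) t + 1) ≠ qbit (2*n) (k:ℕ) := by
      intro hc
      have h1 := EntAux.enc_cpl (2*n) (qbit (2*n) (j:ℕ))
      rw [hc] at h1
      rw [EntAux.enc_qbit (2*n) (j:ℕ) (hM ▸ j.isLt),
        EntAux.enc_qbit (2*n) (k:ℕ) (hM ▸ k.isLt)] at h1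
      omega
    have h := key j k
    rw [EntAux.hdet_ind_zero (2*n) hNpos _ _ hAB] at h
    rw [diag j, diag k, hsymmE j k] at h
    linear_combination h / 2
  · intro j
    set k : Fin (4 ^ n) := ⟨4 ^ n - 1 - (j:ℕ), by have := j.isLt; omega⟩ with hk
    have hB : qbit (2*n) (k:ℕ) = fun t => qbit (2*n) (j:ℕ) t + 1 := by
      apply EntAux.enc_inj (2*n)
      have h1 := EntAux.enc_cpl (2*n) (qbit (2*n) (j:ℕ))
      rw [EntAux.enc_qbit (2*n) (k:ℕ) (hM ▸ k.isLt)]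
      have h2 := EntAux.enc_qbit (2*n) (j:ℕ) (hM ▸ j.isLt)
      have hkval : (k:ℕ) = 4 ^ n - 1 - (j:ℕ) := rfl
      have hjlt := j.isLt
      omega
    have h := key j k
    rw [hB] at h
    rw [EntAux.hdet_ind_anti (2*n) hNpos (even_two_mul n) (qbit (2*n) (j:ℕ))] at h
    rw [EntAux.binWeight_qbit (2*n) (j:ℕ) (hM ▸ j.isLt)] at h
    rw [diag j, diag k, hsymmE j k] at h
    linear_combination h / 2
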